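/- Let λ = (λ₁ ≥ … ≥ λ_N ≥ 0) be a partition and e ≥ λ₁ an integer. Then the top derived Schur polynomial s_λ^{(|λ|)} in e variables is a constant polynomial equal to a strictly positive real number. -/

import Mathlib

open MvPolynomial Finset

/-- `c_k` for `k ∈ ℤ`: the `k`-th elementary symmetric polynomial in `e` variables,
with the convention `c_k = 0` for `k < 0` (and automatically `c_k = 0` for `k > e`). -/
noncomputable def esymmZ (e : ℕ) (k : ℤ) : MvPolynomial (Fin e) ℝ :=
  if k < 0 then 0 else esymm (Fin e) ℝ k.toNat

/-- The Schur polynomial `s_λ = det (c_{λᵢ - i + j})` in `e` variables, for a partition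
given as `lam : Fin N → ℕ` (here `i, j` are `0`-based). -/
noncomputable def schur (e N : ℕ) (lam : Fin N → ℕ) : MvPolynomial (Fin e) ℝ :=
  Matrix.det (Matrix.of fun i j : Fin N => esymmZ e ((lam i : ℤ) - (i : ℤ) + (j : ℤ)))

/-- `s_λ(x₁ + t, …, x_e + t)`, as a polynomial in `t` with coefficients in
`ℝ[x₁, …, x_e]`. -/
noncomputable def schurShift (e N : ℕ) (lam : Fin N → ℕ) :
    Polynomial (MvPolynomial (Fin e) ℝ) :=
  MvPolynomial.aeval (fun k : Fin e => Polynomial.C (MvPolynomial.X k) + Polynomial.X)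
    (schur e N lam)

/-- The `i`-th derived Schur polynomial `s_λ^{(i)}` in `e` variables: the coefficient
of `tⁱ` in `s_λ(x₁ + t, …, x_e + t)`, so that
`s_λ(x₁+t,…,x_e+t) = Σᵢ s_λ^{(i)}(x₁,…,x_e) tⁱ`. -/
noncomputable def derivedSchur (e N : ℕ) (lam : Fin N → ℕ) (i : ℕ) :
    MvPolynomial (Fin e) ℝ :=
  (schurShift e N lam).coeff i

/-- The derived Schur polynomial with index in `ℤ`, with the convention that it
vanishes for negative indices (it automatically vanishes for indices `> |λ|`). -/
noncomputable def derivedSchurZ (e N : ℕ) (lam : Fin N → ℕ) (i : ℤ) :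
    MvPolynomial (Fin e) ℝ :=
  if i < 0 then 0 else derivedSchur e N lam i.toNat


noncomputable def binomZ (m : ℕ) (k : ℤ) : ℝ :=
  if k < 0 then 0 else (m.choose k.toNat : ℝ)

lemma binomZ_nonneg (m : ℕ) (k : ℤ) : 0 ≤ binomZ m k := by
  unfold binomZ; split <;> positivity

lemma binomZ_pascal (m : ℕ) (k : ℤ) :
    binomZ (m + 1) k = binomZ m k + binomZ m (k - 1) := by
  unfold binomZ
  rcases lt_trichotomy k 0 with hk | hk | hk
  · rw [if_pos hk, if_pos hk, if_pos (by omega)]; ring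
  · subst hk; norm_num
  · rw [if_neg (by omega), if_neg (by omega), if_neg (by omega)]
    have h1 : k.toNat = (k - 1).toNat + 1 := by omega
    rw [h1, Nat.choose_succ_succ]
    push_cast; ring

noncomputable def Bmat (m : ℕ) {N : ℕ} (u : Fin N → ℤ) : Matrix (Fin N) (Fin N) ℝ :=
  Matrix.of fun i j => binomZ m (u i + j)

lemma Bmat_id {N : ℕ} {u : Fin N → ℤ} (hu : ∀ i, u i = -(i : ℤ)) :
    Bmat 0 u = 1 := by
  ext i j
  simp only [Bmat, Matrix.of_apply, binomZ, Matrix.one_apply, hu i]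
  by_cases h : i = j
  · subst h; rw [if_neg (by omega), if_pos rfl]
    simp [show (-(i:ℤ) + i).toNat = 0 by omega]
  · have hne : (i:ℤ) ≠ (j:ℤ) := by
      simpa [Fin.ext_iff] using (show ¬ (i:ℕ) = (j:ℕ) by simpa [Fin.ext_iff] using h)
    rcases lt_or_ge (-(i:ℤ) + j) 0 with h2 | h2
    · rw [if_pos h2, if_neg h]
    · rw [if_neg (not_lt.2 h2), if_neg h]
      have hz : (-(i:ℤ) + j).toNat ≠ 0 := by omega
      simp [Nat.choose_eq_zero_iff, Nat.pos_of_ne_zero hz]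

lemma det_Bmat_zero_nonneg {N : ℕ} (u : Fin N → ℤ) (hu : StrictAnti u) :
    0 ≤ (Bmat 0 u).det := by
  by_cases hall : ∀ i : Fin N, -(N : ℤ) < u i ∧ u i ≤ 0
  · have hid : ∀ i : Fin N, u i = -(i : ℤ) := by
      set f : Fin N → Fin N := fun i => ⟨(-(u i)).toNat, by have := hall i; omega⟩ with hf
      have hmono : StrictMono f := by
        intro i j hij
        have h2 := hu hij
        have h1 := (hall i).2; have h3 := (hall j).2
        simp only [hf, Fin.mk_lt_mk]
        omega
      haveI : WellFoundedLT (Fin N) := Finite.to_wellFoundedLT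
      haveI : WellFoundedGT (Fin N) := Finite.to_wellFoundedGT
      intro i
      have h1 : f i ≤ i := hmono.apply_le
      have h2 : i ≤ f i := hmono.le_apply
      have h3 : f i = i := le_antisymm h1 h2
      have h4 := (hall i).2
      simp only [hf, Fin.ext_iff] at h3
      omega
    rw [Bmat_id hid, Matrix.det_one]
    norm_num
  · push_neg at hall
    obtain ⟨i, hi⟩ := hall
    refine le_of_eq (Matrix.det_eq_zero_of_row_eq_zero i fun j => ?_).symm
    simp only [Bmat, Matrix.of_apply, binomZ]
    by_cases hneg : u i + (j : ℤ) < 0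
    · rw [if_pos hneg]
    · rw [if_neg hneg]
      have hj : (j : ℕ) < N := j.isLt
      have hcase : 0 < u i := by
        by_contra hc
        push_neg at hc
        have := hi (by omega)
        omega
      have hz : (u i + (j : ℤ)).toNat ≠ 0 := by omega
      simp [Nat.choose_eq_zero_iff, Nat.pos_of_ne_zero hz]

lemma det_Bmat_succ {N : ℕ} (m : ℕ) (u : Fin N → ℤ) :
    (Bmat (m+1) u).det = ∑ s : Finset (Fin N),
      (Bmat m (fun i => if i ∈ s then u i else u i - 1)).det := by
  classical
  have h : Bmat (m+1) u = Bmat m u + Bmat m (fun i => u i - 1) := by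
    ext i j
    simp only [Bmat, Matrix.of_apply, Matrix.add_apply]
    rw [binomZ_pascal]
    congr 2
    ring
  calc (Bmat (m+1) u).det
      = Matrix.detRowAlternating.toMultilinearMap
          (Bmat m u + (Bmat m fun i => u i - 1)) := by rw [h]; rfl
    _ = ∑ s : Finset (Fin N), Matrix.detRowAlternating.toMultilinearMap
          (s.piecewise (Bmat m u) (Bmat m fun i => u i - 1)) :=
        MultilinearMap.map_add_univ _ _ _
    _ = ∑ s : Finset (Fin N),
          (Bmat m (fun i => if i ∈ s then u i else u i - 1)).det := by
        refine Finset.sum_congr rfl fun s _ => ?_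
        show Matrix.det (s.piecewise (Bmat m u) (Bmat m fun i => u i - 1)) = _
        congr 1
        funext i j
        by_cases hi : i ∈ s
        · simp only [Finset.piecewise, if_pos hi]
          simp [Bmat, hi]
        · simp only [Finset.piecewise, if_neg hi]
          simp [Bmat, hi]

lemma det_Bmat_piecewise_nonneg (m : ℕ) {N : ℕ} (u : Fin N → ℤ) (hu : StrictAnti u)
    (hnn : ∀ {N' : ℕ} (u' : Fin N' → ℤ), StrictAnti u' → 0 ≤ (Bmat m u').det)
    (s : Finset (Fin N)) :
    0 ≤ (Bmat m (fun i => if i ∈ s then u i else u i - 1)).det := by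
  set v : Fin N → ℤ := fun i => if i ∈ s then u i else u i - 1 with hv
  by_cases hinj : Function.Injective v
  · apply hnn
    intro i k hik
    have h2 : u k < u i := hu hik
    have h1 : v k ≤ v i := by
      simp only [hv]
      split <;> split <;> omega
    refine lt_of_le_of_ne h1 fun he => (ne_of_gt hik) (hinj he)
  · rw [Function.not_injective_iff] at hinj
    obtain ⟨a, b, hab, hne⟩ := hinj
    refine le_of_eq (Matrix.det_zero_of_row_eq hne ?_).symm
    funext j
    simp only [Bmat, Matrix.of_apply, hab]

lemma det_Bmat_nonneg : ∀ (m : ℕ) {N : ℕ} (u : Fin N → ℤ), StrictAnti u →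
    0 ≤ (Bmat m u).det := by
  intro m
  induction m with
  | zero => exact fun u hu => det_Bmat_zero_nonneg u hu
  | succ m ih =>
    intro N u hu
    rw [det_Bmat_succ]
    exact Finset.sum_nonneg fun s _ =>
      det_Bmat_piecewise_nonneg m u hu (fun u' hu' => ih u' hu') s

lemma det_Bmat_pos : ∀ (m : ℕ) {N : ℕ} (u : Fin N → ℤ), StrictAnti u →
    (∀ i, 0 ≤ u i + i) → (∀ i, u i + i ≤ m) → 0 < (Bmat m u).det := by
  intro m
  induction m with
  | zero =>
    intro N u hu h0 h1
    have hid : ∀ i : Fin N, u i = -(i : ℤ) := fun i => by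
      have := h0 i; have := h1 i; omega
    rw [Bmat_id hid, Matrix.det_one]
    norm_num
  | succ m ih =>
    intro N u hu h0 h1
    rw [det_Bmat_succ]
    classical
    apply Finset.sum_pos'
    · exact fun s _ =>
        det_Bmat_piecewise_nonneg m u hu (fun u' hu' => det_Bmat_nonneg m u' hu') s
    · refine ⟨Finset.univ.filter (fun i => u i + (i : ℤ) ≤ m), Finset.mem_univ _, ?_⟩
      set v : Fin N → ℤ :=
        fun i => if i ∈ Finset.univ.filter (fun i : Fin N => u i + (i : ℤ) ≤ m)
          then u i else u i - 1 with hv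
      have hvsimp : ∀ i, v i = if u i + (i : ℤ) ≤ m then u i else u i - 1 := by
        intro i
        simp only [hv, Finset.mem_filter, Finset.mem_univ, true_and]
      have hvanti : StrictAnti v := by
        intro i k hik
        have h2 : u k < u i := hu hik
        have h3 : (i : ℕ) < (k : ℕ) := hik
        have hbi := h1 i; have hbk := h1 k
        rw [hvsimp i, hvsimp k]
        split <;> split <;> omega
      have hb0 : ∀ i, 0 ≤ v i + i := by
        intro i
        have := h0 i; have := h1 i
        rw [hvsimp i]; split <;> omega
      have hb1 : ∀ i, v i + i ≤ m := by
        intro i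
        have := h1 i
        rw [hvsimp i]; split <;> omega
      exact ih v hvanti hb0 hb1

lemma esymm_isHomog (e n : ℕ) : (esymm (Fin e) ℝ n).IsHomogeneous n := by
  rw [esymm]
  apply IsHomogeneous.sum
  intro t ht
  have hc : #t = n := Finset.mem_powersetCard_univ.mp ht
  have h := IsHomogeneous.prod t (fun i => (X i : MvPolynomial (Fin e) ℝ))
    (fun _ => 1) (fun i _ => isHomogeneous_X ℝ i)
  simpa [hc] using h

lemma schur_isHomog (e N : ℕ) (lam : Fin N → ℕ) :
    (schur e N lam).IsHomogeneous (∑ j, lam j) := by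
  rw [schur, Matrix.det_apply']
  apply IsHomogeneous.sum
  intro σ _
  simp only [Matrix.of_apply]
  have hC : ((Equiv.Perm.sign σ : ℤ) : MvPolynomial (Fin e) ℝ)
      = MvPolynomial.C (((Equiv.Perm.sign σ : ℤ) : ℝ)) := by
    rw [map_intCast]
  rw [hC]
  by_cases hall : ∀ i : Fin N, 0 ≤ (lam (σ i) : ℤ) - ((σ i : Fin N) : ℤ) + (i : ℤ)
  · have hdegZ : ∑ i : Fin N, ((lam (σ i) : ℤ) - ((σ i : Fin N) : ℤ) + (i : ℤ))
        = ∑ j : Fin N, (lam j : ℤ) := by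
      rw [Finset.sum_add_distrib, Finset.sum_sub_distrib,
        Equiv.sum_comp σ (fun j : Fin N => (lam j : ℤ)),
        Equiv.sum_comp σ (fun j : Fin N => (j : ℤ))]
      ring
    have hdeg : ∑ i : Fin N, ((lam (σ i) : ℤ) - ((σ i : Fin N) : ℤ) + (i : ℤ)).toNat
        = ∑ j, lam j := by
      have : (↑(∑ i : Fin N, ((lam (σ i) : ℤ) - ((σ i : Fin N) : ℤ) + (i : ℤ)).toNat) : ℤ)
          = (↑(∑ j, lam j) : ℤ) := by
        push_cast
        rw [Finset.sum_congr rfl (fun i _ => Int.toNat_of_nonneg (hall i)), hdegZ]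
      exact_mod_cast this
    have hhom := IsHomogeneous.prod Finset.univ
      (fun i : Fin N => esymmZ e ((lam (σ i) : ℤ) - ((σ i : Fin N) : ℤ) + (i : ℤ)))
      (fun i : Fin N => ((lam (σ i) : ℤ) - ((σ i : Fin N) : ℤ) + (i : ℤ)).toNat)
      (fun i _ => by
        unfold esymmZ
        rw [if_neg (not_lt.2 (hall i))]
        exact esymm_isHomog e _)
    rw [hdeg] at hhom
    exact hhom.C_mul _
  · push_neg at hall
    obtain ⟨i, hi⟩ := hall
    have hzero : (∏ i : Fin N, esymmZ e ((lam (σ i) : ℤ) - ((σ i : Fin N) : ℤ) + (i : ℤ))) = 0 :=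
      Finset.prod_eq_zero (Finset.mem_univ i) (by unfold esymmZ; rw [if_pos hi])
    rw [hzero, mul_zero]
    exact isHomogeneous_zero _ _ _

lemma eval_ones_esymmZ (e : ℕ) (k : ℤ) :
    eval (fun _ : Fin e => (1 : ℝ)) (esymmZ e k) = binomZ e k := by
  unfold esymmZ binomZ
  split
  · simp
  · rw [esymm, map_sum]
    have h1 : ∀ t ∈ powersetCard k.toNat (univ : Finset (Fin e)),
        (eval fun _ : Fin e => (1 : ℝ)) (∏ i ∈ t, X i) = 1 := by
      intro t _
      rw [eval_prod]
      simp
    rw [Finset.sum_congr rfl h1]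
    simp [Finset.card_powersetCard]

lemma eval_ones_schur (e N : ℕ) (lam : Fin N → ℕ) :
    eval (fun _ : Fin e => (1 : ℝ)) (schur e N lam)
      = (Bmat e (fun i : Fin N => (lam i : ℤ) - (i : ℤ))).det := by
  rw [schur, RingHom.map_det]
  congr 1
  ext i j
  simp only [RingHom.mapMatrix_apply, Matrix.map_apply, Matrix.of_apply, Bmat]
  rw [eval_ones_esymmZ]

lemma coeff_top_shift {e d : ℕ} {P : MvPolynomial (Fin e) ℝ} (hP : P.IsHomogeneous d) :
    (MvPolynomial.aeval
      (fun k : Fin e => Polynomial.C (MvPolynomial.X k) + Polynomial.X) P).coeff d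
      = MvPolynomial.C (eval (fun _ : Fin e => (1 : ℝ)) P) := by
  rw [aeval_def, eval₂_eq, Polynomial.finset_sum_coeff]
  have key : ∀ dd ∈ P.support,
      (((algebraMap ℝ (Polynomial (MvPolynomial (Fin e) ℝ))) (coeff dd P)
        * ∏ i ∈ dd.support, (Polynomial.C (MvPolynomial.X i) + Polynomial.X) ^ dd i).coeff d)
      = MvPolynomial.C (coeff dd P) := by
    intro dd hdd
    have hdeg : ∑ i ∈ dd.support, dd i = d := by
      have h := hP (mem_support_iff.mp hdd)
      have h' : Finsupp.degree dd = d := by rw [Finsupp.degree_eq_weight_one]; exact h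
      exact h'
    have hmon : ∀ i : Fin e,
        (Polynomial.C (MvPolynomial.X i) + Polynomial.X
          : Polynomial (MvPolynomial (Fin e) ℝ)).Monic := by
      intro i
      rw [add_comm]
      exact Polynomial.monic_X_add_C _
    have hQmon : (∏ i ∈ dd.support,
        (Polynomial.C (MvPolynomial.X i) + Polynomial.X) ^ dd i
        : Polynomial (MvPolynomial (Fin e) ℝ)).Monic :=
      Polynomial.monic_prod_of_monic _ _ fun i _ => (hmon i).pow _
    have hQdeg : (∏ i ∈ dd.support,
        (Polynomial.C (MvPolynomial.X i) + Polynomial.X) ^ dd i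
        : Polynomial (MvPolynomial (Fin e) ℝ)).natDegree = d := by
      rw [Polynomial.natDegree_prod_of_monic _ _ fun i _ => (hmon i).pow _]
      rw [Finset.sum_congr rfl fun i _ => (hmon i).natDegree_pow _]
      rw [Finset.sum_congr rfl fun i _ => by
        rw [add_comm (Polynomial.C (MvPolynomial.X i)), Polynomial.natDegree_X_add_C, mul_one]]
      exact hdeg
    have halg : (algebraMap ℝ (Polynomial (MvPolynomial (Fin e) ℝ))) (coeff dd P)
        = Polynomial.C (MvPolynomial.C (coeff dd P)) := rfl
    rw [halg, Polynomial.coeff_C_mul, ← hQdeg, hQmon.coeff_natDegree, mul_one]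
  rw [Finset.sum_congr rfl key, ← map_sum, eval_eq]
  congr 1
  exact Finset.sum_congr rfl fun dd _ => by simp

/-- for a partition `λ = (λ₁ ≥ … ≥ λ_N ≥ 0)` and an integer `e ≥ λ₁`, the
top derived Schur polynomial `s_λ^{(|λ|)}` in `e` variables is a constant polynomial
equal to a strictly positive real number. -/
theorem derivedSchur_top_pos (e N : ℕ) (hN : 0 < N) (lam : Fin N → ℕ)
    (hanti : Antitone lam) (hle : lam ⟨0, hN⟩ ≤ e) :
    ∃ r : ℝ, 0 < r ∧ derivedSchur e N lam (∑ j, lam j) = MvPolynomial.C r := by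
  refine ⟨(Bmat e (fun i : Fin N => (lam i : ℤ) - (i : ℤ))).det, ?_, ?_⟩
  · apply det_Bmat_pos
    · intro i k hik
      dsimp only
      have h1 : lam k ≤ lam i := hanti (le_of_lt hik)
      have h2 : (i : ℕ) < (k : ℕ) := hik
      omega
    · intro i
      omega
    · intro i
      have h0 : (⟨0, hN⟩ : Fin N) ≤ i := by simp [Fin.le_def]
      have h1 := hanti h0
      omega
  · rw [derivedSchur, schurShift, coeff_top_shift (schur_isHomog e N lam),
      eval_ones_schur]
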